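/- Let X be a random variable with distribution P_X on a finite set 𝒳, let F be a random predicate on 𝒳 independent of X, and let {ρ_x}_{x∈𝒳} be a family of density matrices on ℂ^d. For each predicate f : 𝒳 → {0,1}, let μ^f_1, …, μ^f_d be the eigenvalues of the Hermitian matrix Λ_f := Σ_{x : f(x)=0} P_X(x)·ρ_x − Σ_{x : f(x)=1} P_X(x)·ρ_x. Then d(F(X)|⟨ρ_X,F⟩) = (1/2)·Σ_f P_F(f)·Σ_{j=1}^d |μ^f_j|. -/

import Mathlib

open Finset ComplexOrder

/-- The distance of a distribution `P` on a finite set `Z` from the uniform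
distribution: `d(P) = (1/2) ∑_z |P z - 1/|Z||`. -/
noncomputable def distUnif {Z : Type*} [Fintype Z] (P : Z → ℝ) : ℝ :=
  (1 / 2) * ∑ z, |P z - 1 / (Fintype.card Z : ℝ)|

/-- For a joint distribution `P` on `W × Z` (given as `P : W → Z → ℝ`), the expected
distance of `Z` from uniform given `W`: `d(Z|W) = ∑_w P_W(w) · d(P_{Z|W=w})`. -/
noncomputable def dCond {W Z : Type*} [Fintype W] [Fintype Z] (P : W → Z → ℝ) : ℝ :=
  ∑ w, (∑ z, P w z) * distUnif (fun z => P w z / ∑ z', P w z')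

/-- A POVM on `ℂ^d` with an arbitrary finite outcome set: a family `{E_w}` of positive
semidefinite `d×d` complex matrices summing to the identity. -/
structure POVM (d : ℕ) where
  ι : Type
  [fin : Fintype ι]
  E : ι → Matrix (Fin d) (Fin d) ℂ
  psd : ∀ w, (E w).PosSemidef
  sum_eq : ∑ w, E w = 1

attribute [instance] POVM.fin

/-- Given `X` with distribution `PX` on `𝒳`, a family `{ρ_x}` of density matrices on
`ℂ^d`, and a function `g : 𝒳 → 𝒵`, the distance of `g(X)` from uniform given `ρ_X`:
the supremum over all POVMs `{E_w}` (with arbitrary finite outcome sets) of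
`d(g(X)|W)`, where `W` is the measurement outcome, with joint distribution
`P_{X W}(x,w) = PX x · tr(E_w ρ_x)`. -/
noncomputable def dQuant {d : ℕ} {𝒳 𝒵 : Type} [Fintype 𝒳] [Fintype 𝒵] [DecidableEq 𝒵]
    (PX : 𝒳 → ℝ) (ρ : 𝒳 → Matrix (Fin d) (Fin d) ℂ) (g : 𝒳 → 𝒵) : ℝ :=
  sSup {r : ℝ | ∃ M : POVM d,
    r = dCond (fun (w : M.ι) (z : 𝒵) =>
      ∑ x ∈ univ.filter (fun x => g x = z), PX x * ((M.E w) * ρ x).trace.re)}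

/-! ### Auxiliary lemmas -/

lemma psd_diag_nonneg {n : Type*} [Fintype n] [DecidableEq n] {A : Matrix n n ℂ}
    (hA : A.PosSemidef) (i : n) : 0 ≤ A i i := by
  exact hA.diag_nonneg

lemma trace_mul_psd_nonneg {n : Type*} [Fintype n] [DecidableEq n]
    {A B : Matrix n n ℂ} (hA : A.PosSemidef) (hB : B.PosSemidef) :
    0 ≤ (A * B).trace := by
  open scoped MatrixOrder Matrix.Norms.L2Operator in
  obtain ⟨C, rfl⟩ := CStarAlgebra.nonneg_iff_eq_star_mul_self.mp
    (Matrix.nonneg_iff_posSemidef.mpr hA)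
  rw [Matrix.mul_assoc, Matrix.trace_mul_comm]
  have h := hB.mul_mul_conjTranspose_same C
  rw [Matrix.trace]
  exact Finset.sum_nonneg fun i _ => psd_diag_nonneg h i

lemma bool_dist (P : Bool → ℝ) (h : ∀ z, 0 ≤ P z) :
    (∑ z, P z) * distUnif (fun z => P z / ∑ z', P z') = (1/2) * |P false - P true| := by
  rw [distUnif]
  simp only [Fintype.sum_bool, Fintype.card_bool, Nat.cast_ofNat]
  set a := P true with ha'
  set b := P false with hb'
  rcases eq_or_lt_of_le (add_nonneg (h true) (h false)) with hS | hS
  · have ha : a = 0 := by have := h true; have := h false; linarith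
    have hb : b = 0 := by have := h true; have := h false; linarith
    simp [ha, hb]
  · have hS' : a + b ≠ 0 := ne_of_gt hS
    have h1 : a / (a + b) - 1 / 2 = (a - b) / (2 * (a + b)) := by field_simp; ring
    have h2 : b / (a + b) - 1 / 2 = (b - a) / (2 * (a + b)) := by field_simp; ring
    rw [h1, h2, abs_div, abs_div, abs_sub_comm a b,
      abs_of_pos (by linarith : (0:ℝ) < 2 * (a + b))]
    field_simp
    ring

lemma dCond_bool {W : Type*} [Fintype W] (P : W → Bool → ℝ) (hP : ∀ w z, 0 ≤ P w z) :
    dCond P = (1/2) * ∑ w, |P w false - P w true| := by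
  rw [dCond, Finset.mul_sum]
  exact Finset.sum_congr rfl fun w _ => bool_dist (P w) (hP w)

lemma trace_mul_diag {n : Type*} [Fintype n] [DecidableEq n]
    (A : Matrix n n ℂ) (c : n → ℂ) :
    (A * Matrix.diagonal c).trace = ∑ j, A j j * c j := by
  simp [Matrix.trace, Matrix.diag, Matrix.mul_diagonal]

lemma povm_bound {d : ℕ} (Λ : Matrix (Fin d) (Fin d) ℂ) (hΛ : Λ.IsHermitian)
    (M : POVM d) :
    ∑ w, |((M.E w) * Λ).trace.re| ≤ ∑ j, |hΛ.eigenvalues j| := by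
  set V : Matrix (Fin d) (Fin d) ℂ := (hΛ.eigenvectorUnitary : Matrix (Fin d) (Fin d) ℂ) with hV
  set μ := hΛ.eigenvalues with hμ
  set C : M.ι → Matrix (Fin d) (Fin d) ℂ := fun w => star V * M.E w * V with hC
  have hCpsd : ∀ w, (C w).PosSemidef := fun w => (M.psd w).conjTranspose_mul_mul_same V
  have hdiag : ∀ w j, 0 ≤ ((C w) j j).re ∧ ((C w) j j).im = 0 := by
    intro w j
    have := psd_diag_nonneg (hCpsd w) j
    rw [Complex.le_def] at this
    exact ⟨this.1, this.2.symm⟩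
  have htr : ∀ w, ((M.E w) * Λ).trace = ∑ j, (C w) j j * (μ j : ℂ) := by
    intro w
    conv_lhs => rw [hΛ.spectral_theorem, Unitary.conjStarAlgAut_apply]
    rw [← Matrix.mul_assoc, ← Matrix.mul_assoc, Matrix.trace_mul_comm,
      ← Matrix.mul_assoc, ← Matrix.mul_assoc]
    rw [trace_mul_diag]
    rfl
  have hsumC : ∑ w, C w = 1 := by
    simp only [hC]
    rw [← Finset.sum_mul, ← Finset.mul_sum, M.sum_eq, mul_one]
    exact_mod_cast Unitary.coe_star_mul_self hΛ.eigenvectorUnitary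
  have hsumCd : ∀ j, ∑ w, ((C w) j j).re = 1 := by
    intro j
    have h1 : (∑ w, C w) j j = 1 := by rw [hsumC]; simp [Matrix.one_apply_eq]
    calc ∑ w, ((C w) j j).re = ((∑ w, C w) j j).re := by
          rw [Matrix.sum_apply, Complex.re_sum]
      _ = 1 := by rw [h1]; simp
  have habs : ∀ w, |((M.E w) * Λ).trace.re| ≤ ∑ j, ((C w) j j).re * |μ j| := by
    intro w
    rw [htr w, Complex.re_sum]
    refine (Finset.abs_sum_le_sum_abs _ _).trans ?_
    refine Finset.sum_le_sum fun j _ => ?_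
    rw [Complex.mul_re, Complex.ofReal_re, Complex.ofReal_im, mul_zero, sub_zero,
      abs_mul, abs_of_nonneg (hdiag w j).1]
  calc ∑ w, |((M.E w) * Λ).trace.re| ≤ ∑ w, ∑ j, ((C w) j j).re * |μ j| :=
        Finset.sum_le_sum fun w _ => habs w
    _ = ∑ j, (∑ w, ((C w) j j).re) * |μ j| := by
        rw [Finset.sum_comm]; simp [Finset.sum_mul]
    _ = ∑ j, |μ j| := by simp [hsumCd]

/-- The optimal POVM: the projective measurement onto the nonnegative/negative
eigenspaces of `Λ`. -/
noncomputable def optPOVM {d : ℕ} (Λ : Matrix (Fin d) (Fin d) ℂ) (hΛ : Λ.IsHermitian) :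
    POVM d where
  ι := Bool
  E b := (hΛ.eigenvectorUnitary : Matrix (Fin d) (Fin d) ℂ) *
    Matrix.diagonal (fun j => if decide (0 ≤ hΛ.eigenvalues j) = b then (1:ℂ) else 0) *
    star (hΛ.eigenvectorUnitary : Matrix (Fin d) (Fin d) ℂ)
  psd b := by
    have h : (Matrix.diagonal
        (fun j => if decide (0 ≤ hΛ.eigenvalues j) = b then (1:ℂ) else 0)).PosSemidef := by
      refine Matrix.PosSemidef.diagonal ?_
      intro j
      dsimp
      split
      · exact zero_le_one
      · exact le_refl 0
    simpa [Matrix.star_eq_conjTranspose] using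
      h.mul_mul_conjTranspose_same (hΛ.eigenvectorUnitary : Matrix (Fin d) (Fin d) ℂ)
  sum_eq := by
    rw [Fintype.sum_bool, ← Matrix.add_mul, ← Matrix.mul_add, Matrix.diagonal_add]
    have h : (fun i => (if decide (0 ≤ hΛ.eigenvalues i) = true then (1:ℂ) else 0) +
        (if decide (0 ≤ hΛ.eigenvalues i) = false then (1:ℂ) else 0)) =
        (1 : Fin d → ℂ) := by
      funext j
      by_cases h0 : 0 ≤ hΛ.eigenvalues j <;> simp [h0]
    rw [h]
    have hd1 : Matrix.diagonal (1 : Fin d → ℂ) = 1 := Matrix.diagonal_one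
    rw [hd1, mul_one]
    exact_mod_cast Unitary.coe_mul_star_self hΛ.eigenvectorUnitary

lemma optPOVM_trace {d : ℕ} (Λ : Matrix (Fin d) (Fin d) ℂ) (hΛ : Λ.IsHermitian) (b : Bool) :
    (((optPOVM Λ hΛ).E b) * Λ).trace.re
      = ∑ j ∈ univ.filter (fun j => decide (0 ≤ hΛ.eigenvalues j) = b), hΛ.eigenvalues j := by
  set V : Matrix (Fin d) (Fin d) ℂ := (hΛ.eigenvectorUnitary : Matrix (Fin d) (Fin d) ℂ) with hV
  have hV1 : star V * V = 1 := by
    exact_mod_cast Unitary.coe_star_mul_self hΛ.eigenvectorUnitary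
  have h2 : ∀ X : Matrix (Fin d) (Fin d) ℂ, star V * (V * X) = X := fun X => by
    rw [← Matrix.mul_assoc, hV1, one_mul]
  set Db := Matrix.diagonal (fun j => if decide (0 ≤ hΛ.eigenvalues j) = b then (1:ℂ) else 0)
  set D := Matrix.diagonal (RCLike.ofReal ∘ hΛ.eigenvalues : Fin d → ℂ)
  have hEb : (optPOVM Λ hΛ).E b = V * Db * star V := rfl
  have hE : ((optPOVM Λ hΛ).E b) * Λ = V * ((Db * D) * star V) := by
    rw [hEb]
    conv_lhs => rw [hΛ.spectral_theorem, Unitary.conjStarAlgAut_apply, ← hV]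
    simp only [Matrix.mul_assoc, h2]
    rfl
  rw [hE, Matrix.trace_mul_comm, Matrix.mul_assoc, hV1, mul_one,
    Matrix.diagonal_mul_diagonal, Matrix.trace_diagonal]
  rw [Complex.re_sum, Finset.sum_filter]
  congr 1
  funext j
  split <;> simp [*]

lemma optPOVM_absSum {d : ℕ} (Λ : Matrix (Fin d) (Fin d) ℂ) (hΛ : Λ.IsHermitian) :
    ∑ b, |(((optPOVM Λ hΛ).E b) * Λ).trace.re| = ∑ j, |hΛ.eigenvalues j| := by
  show (∑ b : Bool, |(((optPOVM Λ hΛ).E b) * Λ).trace.re|) = ∑ j, |hΛ.eigenvalues j|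
  rw [Fintype.sum_bool, optPOVM_trace, optPOVM_trace]
  set μ := hΛ.eigenvalues with hμ
  have h1 : |∑ j ∈ univ.filter (fun j => decide (0 ≤ μ j) = true), μ j|
      = ∑ j ∈ univ.filter (fun j => decide (0 ≤ μ j) = true), |μ j| := by
    rw [abs_of_nonneg (Finset.sum_nonneg fun j hj => by
      simpa using (Finset.mem_filter.mp hj).2)]
    exact Finset.sum_congr rfl fun j hj =>
      (abs_of_nonneg (by simpa using (Finset.mem_filter.mp hj).2)).symm
  have hmem : ∀ j ∈ univ.filter (fun j => decide (0 ≤ μ j) = false), μ j ≤ 0 := by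
    intro j hj
    have := (Finset.mem_filter.mp hj).2
    simp only [decide_eq_false_iff_not] at this
    linarith [lt_of_not_ge this]
  have h2 : |∑ j ∈ univ.filter (fun j => decide (0 ≤ μ j) = false), μ j|
      = ∑ j ∈ univ.filter (fun j => decide (0 ≤ μ j) = false), |μ j| := by
    rw [abs_of_nonpos (Finset.sum_nonpos hmem), ← Finset.sum_neg_distrib]
    exact Finset.sum_congr rfl fun j hj => (abs_of_nonpos (hmem j hj)).symm
  rw [h1, h2]
  have hfilter : univ.filter (fun j => decide (0 ≤ μ j) = false)
      = univ.filter (fun j => ¬ (decide (0 ≤ μ j) = true)) := by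
    ext j; simp
  rw [hfilter, Finset.sum_filter_add_sum_filter_not]

lemma dQuant_eq {d : ℕ} {𝒳 : Type} [Fintype 𝒳] [DecidableEq 𝒳]
    (PX : 𝒳 → ℝ) (hPX0 : ∀ x, 0 ≤ PX x)
    (ρ : 𝒳 → Matrix (Fin d) (Fin d) ℂ) (hρ : ∀ x, (ρ x).PosSemidef)
    (f : 𝒳 → Bool)
    (hΛf : (∑ x ∈ univ.filter (fun x => f x = false), (PX x : ℂ) • ρ x
        - ∑ x ∈ univ.filter (fun x => f x = true), (PX x : ℂ) • ρ x).IsHermitian) :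
    dQuant PX ρ f = (1/2) * ∑ j, |hΛf.eigenvalues j| := by
  set Λf := ∑ x ∈ univ.filter (fun x => f x = false), (PX x : ℂ) • ρ x
      - ∑ x ∈ univ.filter (fun x => f x = true), (PX x : ℂ) • ρ x with hΛfdef
  -- for any POVM, the dCond value equals (1/2) ∑_w |tr(E_w Λ_f).re|
  have key : ∀ M : POVM d,
      dCond (fun (w : M.ι) (z : Bool) =>
        ∑ x ∈ univ.filter (fun x => f x = z), PX x * ((M.E w) * ρ x).trace.re)
      = (1/2) * ∑ w, |((M.E w) * Λf).trace.re| := by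
    intro M
    have hP : ∀ (w : M.ι) (z : Bool),
        0 ≤ ∑ x ∈ univ.filter (fun x => f x = z), PX x * ((M.E w) * ρ x).trace.re := by
      intro w z
      refine Finset.sum_nonneg fun x _ => mul_nonneg (hPX0 x) ?_
      have := trace_mul_psd_nonneg (M.psd w) (hρ x)
      rw [Complex.le_def] at this
      simpa using this.1
    rw [dCond_bool _ hP]
    congr 1
    refine Finset.sum_congr rfl fun w _ => ?_
    congr 1
    rw [hΛfdef, mul_sub, Matrix.trace_sub, Complex.sub_re]
    congr 1 <;>
    · rw [Matrix.mul_sum, Matrix.trace_sum, Complex.re_sum]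
      refine Finset.sum_congr rfl fun x _ => ?_
      rw [Matrix.mul_smul, Matrix.trace_smul, smul_eq_mul, Complex.re_ofReal_mul]
  -- the supremum
  rw [dQuant]
  apply le_antisymm
  · refine csSup_le ⟨_, ⟨optPOVM Λf hΛf, rfl⟩⟩ ?_
    rintro r ⟨M, rfl⟩
    rw [key M]
    have := povm_bound Λf hΛf M
    nlinarith [this]
  · refine le_csSup ⟨(1/2) * ∑ j, |hΛf.eigenvalues j|, ?_⟩ ?_
    · rintro r ⟨M, rfl⟩
      rw [key M]
      have := povm_bound Λf hΛf M
      nlinarith [this]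
    · refine ⟨optPOVM Λf hΛf, ?_⟩
      rw [key (optPOVM Λf hΛf), optPOVM_absSum]

theorem lemma_eigenvaluessum {d : ℕ} {𝒳 : Type} [Fintype 𝒳] [DecidableEq 𝒳]
    (PX : 𝒳 → ℝ) (hPX0 : ∀ x, 0 ≤ PX x) (hPX1 : ∑ x, PX x = 1)
    (PF : (𝒳 → Bool) → ℝ) (hPF0 : ∀ f, 0 ≤ PF f) (hPF1 : ∑ f, PF f = 1)
    (ρ : 𝒳 → Matrix (Fin d) (Fin d) ℂ)
    (hρ : ∀ x, (ρ x).PosSemidef) (hρt : ∀ x, (ρ x).trace = 1)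
    (hΛ : ∀ f : 𝒳 → Bool,
      (∑ x ∈ univ.filter (fun x => f x = false), (PX x : ℂ) • ρ x
        - ∑ x ∈ univ.filter (fun x => f x = true), (PX x : ℂ) • ρ x).IsHermitian) :
    ∑ f, PF f * dQuant PX ρ f
      = (1 / 2) * ∑ f, PF f * ∑ j, |(hΛ f).eigenvalues j| := by
  rw [Finset.mul_sum]
  refine Finset.sum_congr rfl fun f _ => ?_
  rw [dQuant_eq PX hPX0 ρ hρ f (hΛ f)]
  ring
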